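/- The word-level spelling length λ is cyclically invariant: for a word U = (U(1),...,U(k)) over the alphabet of a free group, λ((U(k), U(1),...,U(k-1))) = λ(U). -/

import Mathlib

/-- A letter in the alphabet `{X_1,…,X_N, X_1⁻¹,…,X_N⁻¹}`: `(i, true)` is `X_i` and
`(i, false)` is `X_i⁻¹`. -/
abbrev Letter (N : ℕ) := Fin N × Bool

/-- The inverse letter. -/
def invLetter {N : ℕ} (x : Letter N) : Letter N := (x.1, !x.2)

/-- `lam` is the word-level spelling length: `λ(e) = 0` and
`λ(U) = min(1 + λ(U_{2:k}), min_{j : U(j) = U(1)⁻¹} λ(U_{2:j-1}) + λ(U_{j+1:k}))`. -/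
def IsWordSpellingLength {N : ℕ} (lam : List (Letter N) → ℕ) : Prop :=
  lam [] = 0 ∧
    ∀ (x : Letter N) (rest : List (Letter N)),
      lam (x :: rest) =
        ((List.range rest.length).filterMap fun j =>
            if rest[j]? = some (invLetter x) then
              some (lam (rest.take j) + lam (rest.drop (j + 1)))
            else none).foldl min (1 + lam rest)

namespace WSLaux

lemma invLetter_invLetter {N : ℕ} (x : Letter N) : invLetter (invLetter x) = x := by
  simp [invLetter]

lemma foldl_min_le_init : ∀ (l : List ℕ) (i : ℕ), l.foldl min i ≤ i := by
  intro l
  induction l with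
  | nil => intro i; exact le_refl i
  | cons a l ih =>
    intro i
    exact le_trans (ih (min i a)) (min_le_left i a)

lemma foldl_min_le_mem : ∀ (l : List ℕ) (i a : ℕ), a ∈ l → l.foldl min i ≤ a := by
  intro l
  induction l with
  | nil => intro i a h; simp at h
  | cons b l ih =>
    intro i a h
    rcases List.mem_cons.mp h with h | h
    · subst h
      exact le_trans (foldl_min_le_init l (min i a)) (min_le_right i a)
    · exact ih (min i b) a h

lemma foldl_min_cases : ∀ (l : List ℕ) (i : ℕ), l.foldl min i = i ∨ l.foldl min i ∈ l := by
  intro l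
  induction l with
  | nil => intro i; exact Or.inl rfl
  | cons a l ih =>
    intro i
    rcases ih (min i a) with h | h
    · rcases le_total i a with hle | hle
      · left; rw [List.foldl_cons, h, min_eq_left hle]
      · right; rw [List.foldl_cons, h, min_eq_right hle]; exact List.mem_cons_self
    · right; exact List.mem_cons_of_mem _ h

variable {N : ℕ} {lam : List (Letter N) → ℕ}

/-- basic bound: first letter counted. -/
lemma B1 (h : IsWordSpellingLength lam) (x : Letter N) (R : List (Letter N)) :
    lam (x :: R) ≤ 1 + lam R := by
  rw [h.2]
  exact foldl_min_le_init _ _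

lemma get?_middle (A : List (Letter N)) (b : Letter N) (C : List (Letter N)) :
    (A ++ b :: C)[A.length]? = some b := by
  rw [List.getElem?_append_right (le_refl _)]
  simp

lemma take_middle (A : List (Letter N)) (b : Letter N) (C : List (Letter N)) :
    (A ++ b :: C).take A.length = A := List.take_left

lemma drop_middle (A : List (Letter N)) (b : Letter N) (C : List (Letter N)) :
    (A ++ b :: C).drop (A.length + 1) = C := by
  have : A ++ b :: C = (A ++ [b]) ++ C := by simp
  rw [this]
  have hl : (A ++ [b]).length = A.length + 1 := by simp
  rw [← hl]
  exact List.drop_left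

/-- basic bound: first letter cancelled against a matching inverse letter. -/
lemma B2 (h : IsWordSpellingLength lam) (x : Letter N) (A C : List (Letter N)) :
    lam (x :: (A ++ invLetter x :: C)) ≤ lam A + lam C := by
  rw [h.2]
  apply foldl_min_le_mem
  rw [List.mem_filterMap]
  refine ⟨A.length, ?_, ?_⟩
  · rw [List.mem_range]; simp
  · rw [if_pos (get?_middle A _ C), take_middle, drop_middle]

/-- the min in the recursion is attained by some branch. -/
lemma B3 (h : IsWordSpellingLength lam) (x : Letter N) (R : List (Letter N)) :
    lam (x :: R) = 1 + lam R ∨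
      ∃ A C, R = A ++ invLetter x :: C ∧ lam (x :: R) = lam A + lam C := by
  rcases foldl_min_cases
    ((List.range R.length).filterMap fun j =>
      if R[j]? = some (invLetter x) then
        some (lam (R.take j) + lam (R.drop (j + 1)))
      else none) (1 + lam R) with hc | hc
  · left; rw [h.2]; exact hc
  · right
    rw [List.mem_filterMap] at hc
    obtain ⟨j, hjmem, hj⟩ := hc
    by_cases hget : R[j]? = some (invLetter x)
    · rw [if_pos hget] at hj
      obtain ⟨hjlt, -⟩ := List.getElem?_eq_some_iff.mp hget
      refine ⟨R.take j, R.drop (j + 1), ?_, ?_⟩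
      · conv_lhs => rw [← List.take_append_drop j R]
        congr 1
        rw [List.drop_eq_getElem_cons hjlt]
        congr 1
        have := List.getElem?_eq_some_iff.mp hget
        obtain ⟨h1, h2⟩ := this
        simpa [List.get] using h2
      · rw [h.2]; exact (Option.some.injEq _ _ ▸ hj).symm
    · rw [if_neg hget] at hj
      exact absurd hj (by simp)

/-- inserting a single letter increases `lam` by at most one. -/
lemma L3 (h : IsWordSpellingLength lam) :
    ∀ (n : ℕ) (X : List (Letter N)), X.length ≤ n → ∀ (c : Letter N) (Y : List (Letter N)),
      lam (X ++ c :: Y) ≤ 1 + lam (X ++ Y) := by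
  intro n
  induction n with
  | zero =>
    intro X hX c Y
    rw [List.length_eq_zero_iff.mp (Nat.le_zero.mp hX)]
    exact B1 h c Y
  | succ n ih =>
    intro X hX c Y
    match X with
    | [] => exact B1 h c Y
    | d :: X' =>
      have hX' : X'.length ≤ n := by simpa using hX
      rcases B3 h d (X' ++ Y) with hb | ⟨A, C, hAC, hb⟩
      · -- value 1 + lam (X' ++ Y)
        calc lam ((d :: X') ++ c :: Y) ≤ 1 + lam (X' ++ c :: Y) := B1 h d _
          _ ≤ 1 + (1 + lam (X' ++ Y)) := by
              exact Nat.add_le_add_left (ih X' hX' c Y) 1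
          _ = 1 + lam (d :: (X' ++ Y)) := by rw [hb]
          _ = 1 + lam ((d :: X') ++ Y) := rfl
      · rw [show (d :: X') ++ Y = d :: (X' ++ Y) from rfl, hb]
        rcases List.append_eq_append_iff.mp hAC with ⟨w, hA, hY⟩ | ⟨c', hX'eq, hc'⟩
        · -- the cancelling letter lies in Y : Y = w ++ invLetter d :: C, A = X' ++ w
          subst hA; subst hY
          have : (d :: X') ++ c :: (w ++ invLetter d :: C)
              = d :: ((X' ++ c :: w) ++ invLetter d :: C) := by simp
          rw [this]
          calc lam (d :: ((X' ++ c :: w) ++ invLetter d :: C))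
              ≤ lam (X' ++ c :: w) + lam C := B2 h d _ C
            _ ≤ (1 + lam (X' ++ w)) + lam C :=
                Nat.add_le_add_right (ih X' hX' c w) _
            _ = 1 + (lam (X' ++ w) + lam C) := by omega
        · match c' with
          | [] =>
            -- X' = A, Y = invLetter d :: C
            simp only [List.append_nil] at hX'eq
            have hY : Y = invLetter d :: C := by simpa using hc'.symm
            rw [hX'eq] at hX' ⊢
            rw [hY]
            have : (d :: A) ++ c :: invLetter d :: C
                = d :: ((A ++ [c]) ++ invLetter d :: C) := by simp
            rw [this]
            calc lam (d :: ((A ++ [c]) ++ invLetter d :: C))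
                ≤ lam (A ++ [c]) + lam C := B2 h d _ C
              _ ≤ (1 + lam (A ++ [])) + lam C := by
                  exact Nat.add_le_add_right (ih A (by simpa using hX') c []) _
              _ = 1 + (lam A + lam C) := by simp; omega
          | e :: B =>
            -- X' = A ++ invLetter d :: B, C = B ++ Y
            rw [List.cons_append] at hc'
            obtain ⟨he1, he2⟩ := List.cons_eq_cons.mp hc'
            subst he2
            rw [← he1] at hX'eq
            subst hX'eq
            have hBlen : B.length ≤ n := by
              simp [List.length_append] at hX'; omega
            have : (d :: (A ++ invLetter d :: B)) ++ c :: Y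
                = d :: (A ++ invLetter d :: (B ++ c :: Y)) := by simp
            rw [this]
            calc lam (d :: (A ++ invLetter d :: (B ++ c :: Y)))
                ≤ lam A + lam (B ++ c :: Y) := B2 h d A _
              _ ≤ lam A + (1 + lam (B ++ Y)) :=
                  Nat.add_le_add_left (ih B hBlen c Y) _
              _ = 1 + (lam A + lam (B ++ Y)) := by omega

/-- key nested-branch bound. -/
lemma Key3 (h : IsWordSpellingLength lam) (x y : Letter N) (V₁ V₂ : List (Letter N)) :
    lam (x :: y :: (V₁ ++ invLetter y :: V₂)) ≤ lam V₁ + lam (x :: V₂) := by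
  rcases B3 h x V₂ with hb | ⟨W₁, W₂, hW, hb⟩
  · rw [hb]
    calc lam (x :: y :: (V₁ ++ invLetter y :: V₂))
        ≤ 1 + lam (y :: (V₁ ++ invLetter y :: V₂)) := B1 h x _
      _ ≤ 1 + (lam V₁ + lam V₂) := Nat.add_le_add_left (B2 h y V₁ V₂) 1
      _ = lam V₁ + (1 + lam V₂) := by omega
  · rw [hb]; subst hW
    have : x :: y :: (V₁ ++ invLetter y :: (W₁ ++ invLetter x :: W₂))
        = x :: ((y :: (V₁ ++ invLetter y :: W₁)) ++ invLetter x :: W₂) := by simp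
    rw [this]
    calc lam (x :: ((y :: (V₁ ++ invLetter y :: W₁)) ++ invLetter x :: W₂))
        ≤ lam (y :: (V₁ ++ invLetter y :: W₁)) + lam W₂ := B2 h x _ W₂
      _ ≤ (lam V₁ + lam W₁) + lam W₂ := Nat.add_le_add_right (B2 h y V₁ W₁) _
      _ = lam V₁ + (lam W₁ + lam W₂) := by omega

/-- from one-sided rotation inequality (at bounded lengths) to equality. -/
lemma eq_of_le (h : IsWordSpellingLength lam) (n : ℕ)
    (hle : ∀ (V : List (Letter N)) (y : Letter N), V.length ≤ n → lam (y :: V) ≤ lam (V ++ [y])) :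
    ∀ (V : List (Letter N)) (y : Letter N), V.length ≤ n → lam (y :: V) = lam (V ++ [y]) := by
  have rot : ∀ (k : ℕ) (W : List (Letter N)), W.length ≤ n + 1 → lam W ≤ lam (W.rotate k) := by
    intro k
    induction k with
    | zero => intro W _; rw [List.rotate_zero]
    | succ k ih =>
      intro W hW
      refine le_trans (ih W hW) ?_
      have h1 : (W.rotate k).rotate 1 = W.rotate (k + 1) := by
        rw [List.rotate_rotate]
      rw [← h1]
      match hWk : W.rotate k with
      | [] => simp
      | z :: T =>
        have hT : T.length ≤ n := by
          have := List.length_rotate W k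
          rw [hWk] at this
          simp at this; omega
        have : (z :: T).rotate 1 = T ++ [z] := by
          rw [List.rotate_cons_succ, List.rotate_zero]
        rw [this]
        exact hle T z hT
  intro V y hV
  refine le_antisymm (hle V y hV) ?_
  have h1 : (V ++ [y]).rotate V.length = y :: V := by
    rw [List.rotate_eq_drop_append_take (by simp)]
    rw [List.drop_left, List.take_left]
    rfl
  have := rot V.length (V ++ [y]) (by simp; omega)
  rw [h1] at this
  exact this

/-- main one-sided inequality, by strong induction on length. -/
lemma Ple (h : IsWordSpellingLength lam) :
    ∀ (n : ℕ) (U : List (Letter N)) (x : Letter N), U.length ≤ n →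
      lam (x :: U) ≤ lam (U ++ [x]) := by
  intro n
  induction n with
  | zero =>
    intro U x hU
    rw [List.length_eq_zero_iff.mp (Nat.le_zero.mp hU)]
    simp
  | succ n ih =>
    intro U x hU
    have EqIH : ∀ (V : List (Letter N)) (y : Letter N), V.length ≤ n →
        lam (y :: V) = lam (V ++ [y]) := eq_of_le h n (fun V y hV => ih V y hV)
    match U with
    | [] => simp
    | y :: V =>
      have hV : V.length ≤ n := by simpa using hU
      rw [show (y :: V) ++ [x] = y :: (V ++ [x]) from rfl]
      rcases B3 h y (V ++ [x]) with hb | ⟨A, C, hAC, hb⟩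
      · rw [hb, ← EqIH V x hV]
        exact L3 h 1 [x] (by simp) y V
      · rw [hb]
        rcases List.append_eq_append_iff.mp hAC with ⟨w, hA, hw⟩ | ⟨c', hVeq, hc'⟩
        · -- [x] = w ++ invLetter y :: C : forces w = [], x = invLetter y, C = []
          have hw' : w = [] ∧ x = invLetter y ∧ C = [] := by
            match w with
            | [] =>
              simp only [List.nil_append] at hw
              obtain ⟨h1, h2⟩ := List.cons_eq_cons.mp hw
              exact ⟨rfl, h1, h2.symm⟩
            | a :: w' =>
              exfalso
              have := congrArg List.length hw
              simp at this
          obtain ⟨hw0, hx, hC⟩ := hw'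
          subst hw0; subst hC
          simp only [List.append_nil] at hA
          rw [hA, h.1]
          have hy : y = invLetter x := by rw [hx, invLetter_invLetter]
          calc lam (x :: y :: V) = lam (x :: ([] ++ invLetter x :: V)) := by
                rw [hy]; rfl
            _ ≤ lam [] + lam V := B2 h x [] V
            _ ≤ lam V + 0 := by rw [h.1]; omega
        · match c' with
          | [] =>
            -- V = A, [x] = invLetter y :: C forces x = invLetter y, C = []
            simp only [List.append_nil] at hVeq
            simp only [List.nil_append] at hc'
            obtain ⟨hx, hC⟩ := List.cons_eq_cons.mp hc'
            rw [hC, h.1, ← hVeq]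
            have hy : y = invLetter x := by rw [← hx, invLetter_invLetter]
            calc lam (x :: y :: V) = lam (x :: ([] ++ invLetter x :: V)) := by
                  rw [hy]; rfl
              _ ≤ lam [] + lam V := B2 h x [] V
              _ ≤ lam V + 0 := by rw [h.1]; omega
          | e :: B =>
            -- V = A ++ e :: B with e = invLetter y, C = B ++ [x]
            rw [List.cons_append] at hc'
            obtain ⟨he1, he2⟩ := List.cons_eq_cons.mp hc'
            subst he2
            rw [← he1] at hVeq
            subst hVeq
            have hBlen : B.length ≤ n := by
              simp [List.length_append] at hV; omega
            rw [← EqIH B x hBlen]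
            exact Key3 h x y A B

end WSLaux

/-- the word-level spelling length is cyclically invariant:
`λ((U(k), U(1),…,U(k-1))) = λ(U)`. -/
theorem wordSpellingLength_cyclic {N : ℕ}
    (lam : List (Letter N) → ℕ) (hlam : IsWordSpellingLength lam)
    (U : List (Letter N)) (x : Letter N) :
    lam (x :: U) = lam (U ++ [x]) := by
  exact WSLaux.eq_of_le hlam U.length
    (fun V y hV => WSLaux.Ple hlam U.length V y hV) U x (le_refl _)
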